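/- Let q and u be real random variables on a probability space such that q ≥ 0 almost surely, q and u are independent, E[q²] < ∞ and E[u²] < ∞, and the random variable max(q − u, 0) has the same distribution as q. Then E[u²] − 2·E[u]·E[q] = E[(max(u − q, 0))²]. (Identity (58), used in the proof of Theorem 8 to bound the average queue size of the relay's buffer in steady state.) -/

import Mathlib

open MeasureTheory ProbabilityTheory

/-- **Identity (58)** (used in the proof of Theorem 8). If `q ≥ 0` a.s. is a
stationary queue length for the Lindley recursion with net decrement `u`
(i.e. `max(q − u, 0)` has the same law as `q`), `q` and `u` are independent
with finite second moments, then
`E[u²] − 2 E[u] E[q] = E[(max(u − q, 0))²]`. -/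
theorem lindley_stationary_identity
    {Ω : Type*} [MeasurableSpace Ω] (P : Measure Ω) [IsProbabilityMeasure P]
    (q u : Ω → ℝ) (hq : Measurable q) (hu : Measurable u)
    (hq0 : ∀ᵐ ω ∂P, 0 ≤ q ω)
    (hindep : IndepFun q u P)
    (hq2 : Integrable (fun ω => q ω ^ 2) P)
    (hu2 : Integrable (fun ω => u ω ^ 2) P)
    (hstat : P.map (fun ω => max (q ω - u ω) 0) = P.map q) :
    (∫ ω, u ω ^ 2 ∂P) - 2 * (∫ ω, u ω ∂P) * (∫ ω, q ω ∂P)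
      = ∫ ω, (max (u ω - q ω) 0) ^ 2 ∂P := by
  -- integrability
  have hqi : Integrable q P :=
    ((memLp_two_iff_integrable_sq hq.aestronglyMeasurable).mpr hq2).integrable one_le_two
  have hui : Integrable u P :=
    ((memLp_two_iff_integrable_sq hu.aestronglyMeasurable).mpr hu2).integrable one_le_two
  have hqu : Integrable (q * u) P := hindep.integrable_mul hqi hui
  have hsq : Integrable (fun ω => (q ω - u ω) ^ 2) P := by
    have : (fun ω => (q ω - u ω) ^ 2)
        = fun ω => q ω ^ 2 - 2 * (q ω * u ω) + u ω ^ 2 := by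
      funext ω; ring
    rw [this]
    exact (hq2.sub (hqu.const_mul 2)).add hu2
  have hmax2 : Integrable (fun ω => (max (u ω - q ω) 0) ^ 2) P := by
    refine hsq.mono ((hu.sub hq).max measurable_const |>.pow_const 2).aestronglyMeasurable
      (Filter.Eventually.of_forall fun ω => ?_)
    have h1 : |max (u ω - q ω) 0| ≤ |q ω - u ω| := by
      rcases le_total (u ω) (q ω) with h | h
      · rw [max_eq_right (by linarith)]; simp [abs_nonneg]
      · rw [max_eq_left (by linarith)]
        rw [abs_sub_comm]
    simp only [Real.norm_eq_abs, abs_pow]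
    exact pow_le_pow_left₀ (abs_nonneg _) h1 2
  have hmaxq2 : Integrable (fun ω => (max (q ω - u ω) 0) ^ 2) P := by
    refine hsq.mono ((hq.sub hu).max measurable_const |>.pow_const 2).aestronglyMeasurable
      (Filter.Eventually.of_forall fun ω => ?_)
    have h1 : |max (q ω - u ω) 0| ≤ |q ω - u ω| := by
      rcases le_total (u ω) (q ω) with h | h
      · rw [max_eq_left (by linarith)]
      · rw [max_eq_right (by linarith)]; simp [abs_nonneg]
    simp only [Real.norm_eq_abs, abs_pow]
    exact pow_le_pow_left₀ (abs_nonneg _) h1 2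
  -- stationarity: E[(max(q-u,0))²] = E[q²]
  have hstat2 : ∫ ω, (max (q ω - u ω) 0) ^ 2 ∂P = ∫ ω, q ω ^ 2 ∂P := by
    have h1 : ∫ ω, (max (q ω - u ω) 0) ^ 2 ∂P
        = ∫ x, x ^ 2 ∂(P.map (fun ω => max (q ω - u ω) 0)) :=
      (integral_map ((hq.sub hu).max measurable_const).aemeasurable
        (measurable_id.pow_const 2).aestronglyMeasurable).symm
    have h2 : ∫ x, x ^ 2 ∂(P.map q) = ∫ ω, q ω ^ 2 ∂P :=
      integral_map hq.aemeasurable (measurable_id.pow_const 2).aestronglyMeasurable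
    rw [h1, hstat, h2]
  -- pointwise identity
  have hpt : ∀ ω, (max (q ω - u ω) 0) ^ 2
      = (q ω - u ω) ^ 2 - (max (u ω - q ω) 0) ^ 2 := by
    intro ω
    rcases le_total (u ω) (q ω) with h | h
    · rw [max_eq_left (by linarith), max_eq_right (by linarith)]; ring
    · rw [max_eq_right (by linarith), max_eq_left (by linarith)]; ring
  -- independence: E[qu] = E[q]E[u]
  have hEqu : ∫ ω, q ω * u ω ∂P = (∫ ω, q ω ∂P) * (∫ ω, u ω ∂P) :=
    hindep.integral_fun_mul_eq_mul_integral hq.aestronglyMeasurable hu.aestronglyMeasurable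
  have hexp : ∫ ω, (q ω - u ω) ^ 2 ∂P
      = (∫ ω, q ω ^ 2 ∂P) - 2 * ((∫ ω, q ω ∂P) * (∫ ω, u ω ∂P)) + ∫ ω, u ω ^ 2 ∂P := by
    have h2qu : Integrable (fun ω => 2 * (q ω * u ω)) P := by
      simpa [Pi.mul_apply] using hqu.const_mul 2
    have hA : Integrable (fun ω => q ω ^ 2 - 2 * (q ω * u ω)) P := hq2.sub h2qu
    calc ∫ ω, (q ω - u ω) ^ 2 ∂P
        = ∫ ω, (q ω ^ 2 - 2 * (q ω * u ω)) + u ω ^ 2 ∂P := by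
          congr 1; funext ω; ring
      _ = (∫ ω, (q ω ^ 2 - 2 * (q ω * u ω)) ∂P) + ∫ ω, u ω ^ 2 ∂P :=
          integral_add hA hu2
      _ = ((∫ ω, q ω ^ 2 ∂P) - ∫ ω, 2 * (q ω * u ω) ∂P) + ∫ ω, u ω ^ 2 ∂P := by
          rw [integral_sub hq2 h2qu]
      _ = (∫ ω, q ω ^ 2 ∂P) - 2 * ((∫ ω, q ω ∂P) * (∫ ω, u ω ∂P)) + ∫ ω, u ω ^ 2 ∂P := by
          rw [integral_const_mul, hEqu]
  have hsplit : ∫ ω, (max (q ω - u ω) 0) ^ 2 ∂P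
      = (∫ ω, (q ω - u ω) ^ 2 ∂P) - ∫ ω, (max (u ω - q ω) 0) ^ 2 ∂P := by
    rw [← integral_sub hsq hmax2]
    exact integral_congr_ae (Filter.Eventually.of_forall fun ω => hpt ω)
  have hfin := hsplit
  rw [hstat2, hexp] at hfin
  linarith
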